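/- Let M be a matroid on a finite ground set E, let k be a natural number, and let K_1, …, K_k ⊆ E be sets such that r(K_i) ≥ i for every i ∈ {1, …, k}. Then there exist elements v_1, …, v_k with v_i ∈ K_i for each i, the v_i pairwise distinct, and {v_1, …, v_k} an independent set of M. -/

import Mathlib

/-- A matroid on a finite ground set `E`, given by its family of independent sets
satisfying the independence axioms (I1), (I2), (I3). -/
structure FinMatroid (α : Type*) [DecidableEq α] where
  /-- the finite ground set -/
  E : Finset α
  /-- the family of independent sets -/
  Indep : Finset α → Prop
  /-- independent sets are subsets of the ground set -/
  indep_subset_ground : ∀ ⦃I⦄, Indep I → I ⊆ E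
  /-- (I1): the empty set is independent -/
  empty_indep : Indep ∅
  /-- (I2): subsets of independent sets are independent -/
  indep_subset : ∀ ⦃I J⦄, Indep J → I ⊆ J → Indep I
  /-- (I3): the exchange axiom -/
  indep_exchange : ∀ ⦃I J⦄, Indep I → Indep J → I.card < J.card →
    ∃ v ∈ J, v ∉ I ∧ Indep (insert v I)

/-- The rank of a set `X`: the maximum cardinality of an independent subset of `X`. -/
noncomputable def FinMatroid.r {α : Type*} [DecidableEq α] (M : FinMatroid α)
    (X : Finset α) : ℕ :=
  sSup {n : ℕ | ∃ I ⊆ X, M.Indep I ∧ I.card = n}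

lemma FinMatroid.rank_achieved {α : Type*} [DecidableEq α] (M : FinMatroid α)
    (X : Finset α) (n : ℕ) (h : n ≤ M.r X) :
    ∃ I ⊆ X, M.Indep I ∧ I.card = n := by
  have h0 : 0 ∈ {n : ℕ | ∃ I ⊆ X, M.Indep I ∧ I.card = n} :=
    ⟨∅, Finset.empty_subset _, M.empty_indep, Finset.card_empty⟩
  have hbdd : BddAbove {n : ℕ | ∃ I ⊆ X, M.Indep I ∧ I.card = n} := by
    refine ⟨X.card, fun m hm => ?_⟩
    obtain ⟨I, hIX, -, rfl⟩ := hm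
    exact Finset.card_le_card hIX
  obtain ⟨I, hIX, hInd, hIcard⟩ := Nat.sSup_mem ⟨0, h0⟩ hbdd
  rw [FinMatroid.r] at h
  obtain ⟨J, hJI, hJcard⟩ := Finset.exists_subset_card_eq (s := I) (n := n) (hIcard ▸ h)
  exact ⟨J, hJI.trans hIX, M.indep_subset hInd hJI, hJcard⟩

theorem exists_indep_transversal_of_rank_ge_index {α : Type*} [DecidableEq α]
    (M : FinMatroid α) (k : ℕ) (K : Fin k → Finset α)
    (hK : ∀ i, K i ⊆ M.E) (hr : ∀ i : Fin k, (i : ℕ) + 1 ≤ M.r (K i)) :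
    ∃ v : Fin k → α, (∀ i, v i ∈ K i) ∧ Function.Injective v ∧
      M.Indep (Finset.image v Finset.univ) := by
  induction k with
  | zero =>
    refine ⟨Fin.elim0, fun i => i.elim0, fun i => i.elim0, ?_⟩
    simpa using M.empty_indep
  | succ n ih =>
    obtain ⟨v, hv, hinj, hindep⟩ := ih (fun i => K i.castSucc)
      (fun i => hK i.castSucc) (fun i => hr i.castSucc)
    set I := Finset.image v Finset.univ with hI
    have hcard : I.card = n := by
      rw [hI, Finset.card_image_of_injective _ hinj, Finset.card_univ, Fintype.card_fin]
    obtain ⟨J, hJX, hJind, hJcard⟩ :=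
      FinMatroid.rank_achieved M (K (Fin.last n)) (n + 1) (by simpa using hr (Fin.last n))
    obtain ⟨w, hwJ, hwI, hwind⟩ := M.indep_exchange hindep hJind (by omega)
    refine ⟨Fin.snoc v w, ?_, ?_, ?_⟩
    · intro i
      refine Fin.lastCases ?_ ?_ i
      · simpa using hJX hwJ
      · intro j; simpa using hv j
    · intro a b
      refine Fin.lastCases ?_ (fun a' => ?_) a <;>
        refine Fin.lastCases ?_ (fun b' => ?_) b <;> intro h <;>
        simp only [Fin.snoc_last, Fin.snoc_castSucc] at h
      · rfl
      · exact absurd (Finset.mem_image.2 ⟨b', Finset.mem_univ _, h.symm⟩) hwI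
      · exact absurd (Finset.mem_image.2 ⟨a', Finset.mem_univ _, h⟩) hwI
      · exact congrArg Fin.castSucc (hinj h)
    · have himg : Finset.image (Fin.snoc v w : Fin (n+1) → α) Finset.univ
          = insert w I := by
        ext a
        simp only [Finset.mem_image, Finset.mem_insert, Finset.mem_univ, true_and, hI]
        constructor
        · rintro ⟨i, rfl⟩
          refine Fin.lastCases ?_ ?_ i
          · simp
          · intro j; exact Or.inr ⟨j, by simp⟩
        · rintro (rfl | ⟨j, rfl⟩)
          · refine ⟨Fin.last n, ?_⟩; simp
          · refine ⟨j.castSucc, ?_⟩; simp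
      rw [himg]
      exact hwind
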